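/- For every n ≥ 1, the Morse complex M(P_{3n-1}) of the path on 3n vertices is strongly collapsible. -/

import Mathlib

open Finset

/-- An abstract simplicial complex on vertex type `V`. -/
structure SComplex (V : Type*) where
  faces : Finset V → Prop
  not_empty : ¬ faces ∅
  down_closed : ∀ {σ τ : Finset V}, faces τ → σ ⊆ τ → σ.Nonempty → faces σ

/-- The complex generated by a set of simplices (downward closure). -/
def ofGens {V : Type*} (gens : Set (Finset V)) : SComplex V where
  faces σ := σ.Nonempty ∧ ∃ τ ∈ gens, σ ⊆ τ
  not_empty h := by simpa using h.1
  down_closed := by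
    rintro σ τ ⟨-, τ', hτ', hsub'⟩ hsub hne
    exact ⟨hne, τ', hτ', hsub.trans hsub'⟩

/-- A primitive (gradient) vector field on `K`: a single regular pair `(σ, τ)`
with `σ` a codimension-one face of `τ`. -/
structure VPair {V : Type*} (K : SComplex V) where
  lo : Finset V
  hi : Finset V
  lo_face : K.faces lo
  hi_face : K.faces hi
  lo_sub : lo ⊆ hi
  card_eq : hi.card = lo.card + 1

noncomputable instance {V : Type*} (K : SComplex V) : DecidableEq (VPair K) :=
  Classical.decEq _

/-- Two primitive pairs share no simplex. -/
def VPair.Compatible {V : Type*} {K : SComplex V} (p q : VPair K) : Prop :=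
  p.lo ≠ q.lo ∧ p.lo ≠ q.hi ∧ p.hi ≠ q.lo ∧ p.hi ≠ q.hi

/-- A discrete vector field: each simplex occurs in at most one pair. -/
def IsDVF {V : Type*} {K : SComplex V} (W : Set (VPair K)) : Prop :=
  ∀ p ∈ W, ∀ q ∈ W, p ≠ q → VPair.Compatible p q

/-- Existence of a nontrivial closed `V`-path. -/
def HasClosedPath {V : Type*} {K : SComplex V} (W : Set (VPair K)) : Prop :=
  ∃ k : ℕ, 0 < k ∧ ∃ c : ZMod k → VPair K, (∀ i, c i ∈ W) ∧
    ∀ i, (c (i + 1)).lo ⊆ (c i).hi ∧ (c (i + 1)).lo ≠ (c i).lo ∧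
      (c (i + 1)).lo.card + 1 = (c i).hi.card

/-- A gradient vector field: a discrete vector field with no nontrivial closed path. -/
def IsGVF {V : Type*} {K : SComplex V} (W : Set (VPair K)) : Prop :=
  IsDVF W ∧ ¬ HasClosedPath W

/-- The Morse complex of `K`: vertices are primitive gradient vector fields,
simplices are gradient vector fields. -/
def MorseComplex {V : Type*} (K : SComplex V) : SComplex (VPair K) where
  faces S := S.Nonempty ∧ IsGVF {p | p ∈ S}
  not_empty h := by simpa using h.1
  down_closed := by
    rintro σ τ ⟨hne', hdvf, hnc⟩ hsub hne
    refine ⟨hne, fun p hp q hq hpq => hdvf p (hsub hp) q (hsub hq) hpq, fun h => hnc ?_⟩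
    obtain ⟨k, hk, c, hc, hpath⟩ := h
    exact ⟨k, hk, c, fun i => hsub (hc i), hpath⟩

/-- The pure Morse complex: the subcomplex of `MorseComplex K` generated by the
facets of maximum dimension (maximum gradient vector fields). -/
def pureMorse {V : Type*} (K : SComplex V) : SComplex (VPair K) where
  faces S := (MorseComplex K).faces S ∧ ∃ T : Finset (VPair K), S ⊆ T ∧
      (MorseComplex K).faces T ∧
      ∀ T' : Finset (VPair K), (MorseComplex K).faces T' → T'.card ≤ T.card
  not_empty h := (MorseComplex K).not_empty h.1
  down_closed := by
    rintro σ τ ⟨hτ, T, hsub', hT, hmax⟩ hsub hne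
    exact ⟨(MorseComplex K).down_closed hτ hsub hne, T, hsub.trans hsub', hT, hmax⟩

/-- `σ` is a facet (maximal simplex) of `K`. -/
def IsFacet {V : Type*} (K : SComplex V) (σ : Finset V) : Prop :=
  K.faces σ ∧ ∀ τ, K.faces τ → σ ⊆ τ → σ = τ

/-- `w` dominates `w'`: every facet containing `w'` contains `w`. -/
def Dominates {V : Type*} (K : SComplex V) (w w' : V) : Prop :=
  ∀ σ, IsFacet K σ → w' ∈ σ → w ∈ σ

/-- `K` is minimal: no vertex dominates another vertex. -/
def MinimalComplex {V : Type*} (K : SComplex V) : Prop :=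
  ∀ w w' : V, K.faces {w} → K.faces {w'} → w ≠ w' → ¬ Dominates K w w'

/-- Strong collapsibility of a face predicate: a sequence of removals of
dominated vertices reaching a single point. -/
inductive SCAux {V : Type*} : (Finset V → Prop) → Prop
  | point (F : Finset V → Prop) (v : V) (h : ∀ σ, F σ ↔ σ = {v}) : SCAux F
  | step (F : Finset V → Prop) (w w' : V) (hne : w ≠ w') (hw : F {w}) (hw' : F {w'})
      (hdom : ∀ σ, (F σ ∧ ∀ τ, F τ → σ ⊆ τ → σ = τ) → w' ∈ σ → w ∈ σ)
      (h : SCAux (fun σ => F σ ∧ w' ∉ σ)) : SCAux F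

def StronglyCollapsible {V : Type*} (K : SComplex V) : Prop := SCAux K.faces

/-- `F` strongly collapses to `G` by a sequence of removals of dominated vertices. -/
inductive SCTo {V : Type*} : (Finset V → Prop) → (Finset V → Prop) → Prop
  | refl (F : Finset V → Prop) : SCTo F F
  | step (F G : Finset V → Prop) (w w' : V) (hne : w ≠ w') (hw : F {w}) (hw' : F {w'})
      (hdom : ∀ σ, (F σ ∧ ∀ τ, F τ → σ ⊆ τ → σ = τ) → w' ∈ σ → w ∈ σ)
      (h : SCTo (fun σ => F σ ∧ w' ∉ σ) G) : SCTo F G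

/-- Collapsibility (Forman): removal of free pairs down to a point. -/
inductive CollAux {V : Type*} : (Finset V → Prop) → Prop
  | point (F : Finset V → Prop) (v : V) (h : ∀ σ, F σ ↔ σ = {v}) : CollAux F
  | step (F : Finset V → Prop) (σ τ : Finset V) (hστ : σ ⊂ τ) (hσ : F σ) (hτ : F τ)
      (hfree : ∀ ρ, F ρ → σ ⊂ ρ → ρ = τ)
      (h : CollAux (fun ρ => F ρ ∧ ρ ≠ σ ∧ ρ ≠ τ)) : CollAux F

def Collapsible {V : Type*} (K : SComplex V) : Prop := CollAux K.faces

/-- The degree of a vertex: the number of edges of `K` containing it. -/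
noncomputable def sdeg {V : Type*} (K : SComplex V) (x : V) : ℕ :=
  Set.ncard {σ : Finset V | K.faces σ ∧ σ.card = 2 ∧ x ∈ σ}

/-- Image of a finset, with a classical decidability instance. -/
noncomputable def fimage {V W : Type*} (f : V → W) (σ : Finset V) : Finset W :=
  haveI := Classical.decEq W
  σ.image f

/-- An isomorphism between two simplicial complexes given by face predicates. -/
structure ComplexIso {V W : Type*} (F : Finset V → Prop) (G : Finset W → Prop) where
  toFun : V → W
  invFun : W → V
  left_inv : ∀ x, F {x} → invFun (toFun x) = x
  right_inv : ∀ y, G {y} → toFun (invFun y) = y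
  map_face : ∀ σ, F σ → G (fimage toFun σ)
  inv_face : ∀ τ, G τ → F (fimage invFun τ)

/-- The join of two simplicial complexes. -/
def sJoin {V W : Type*} [DecidableEq V] [DecidableEq W] (K : SComplex V) (L : SComplex W) :
    SComplex (V ⊕ W) :=
  ofGens {σ | ∃ α β, (K.faces α ∨ α = ∅) ∧ (L.faces β ∨ β = ∅) ∧
    σ = α.image Sum.inl ∪ β.image Sum.inr}

/-- The disjoint union of two simplicial complexes. -/
def sDisjUnion {V W : Type*} [DecidableEq V] [DecidableEq W] (K : SComplex V) (L : SComplex W) :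
    SComplex (V ⊕ W) :=
  ofGens ({σ | ∃ α, K.faces α ∧ σ = α.image Sum.inl} ∪
          {σ | ∃ β, L.faces β ∧ σ = β.image Sum.inr})

/-- The simplicial complex of a simple graph (vertices and edges). -/
def graphComplex {V : Type*} [DecidableEq V] (G : SimpleGraph V) : SComplex V :=
  ofGens ({σ | ∃ x, σ = {x}} ∪ {σ | ∃ x y, G.Adj x y ∧ σ = ({x, y} : Finset V)})

/-- Attach a leaf (pendant edge) to `K` at the vertex `x`. -/
def attachLeaf {V : Type*} [DecidableEq V] (K : SComplex V) (x : V) : SComplex (V ⊕ Unit) :=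
  ofGens ({σ | ∃ α, K.faces α ∧ σ = α.image Sum.inl} ∪
          {({Sum.inl x, Sum.inr ()} : Finset (V ⊕ Unit))})

/-- The cycle graph on `ZMod n`. -/
def cycleGraph (n : ℕ) : SimpleGraph (ZMod n) :=
  SimpleGraph.fromRel (fun i j => j = i + 1)

/-- Attach one new leaf to every vertex of a graph. -/
def addLeaves {V : Type*} [DecidableEq V] (G : SimpleGraph V) : SComplex (V ⊕ V) :=
  ofGens ({σ | ∃ x y, G.Adj x y ∧ σ = ({Sum.inl x, Sum.inl y} : Finset (V ⊕ V))} ∪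
          {σ | ∃ u, σ = ({Sum.inl u, Sum.inr u} : Finset (V ⊕ V))})

/-- The geometric realization of `K`, inside `V → ℝ`. -/
def realization {V : Type*} (K : SComplex V) : Set (V → ℝ) :=
  {f | ∃ σ, K.faces σ ∧ (∀ x, 0 ≤ f x) ∧ (∀ x, f x ≠ 0 → x ∈ σ) ∧ ∑ x ∈ σ, f x = 1}

/-- A Hasse-diagram edge of a poset: a covering pair. -/
structure HEdge (P : Type*) [PartialOrder P] where
  lo : P
  hi : P
  cov : lo ⋖ hi

noncomputable instance {P : Type*} [PartialOrder P] : DecidableEq (HEdge P) :=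
  Classical.decEq _

def HEdge.Compat {P : Type*} [PartialOrder P] (p q : HEdge P) : Prop :=
  p.lo ≠ q.lo ∧ p.lo ≠ q.hi ∧ p.hi ≠ q.lo ∧ p.hi ≠ q.hi

def HasPosetCycle {P : Type*} [PartialOrder P] (W : Set (HEdge P)) : Prop :=
  ∃ k : ℕ, 0 < k ∧ ∃ c : ZMod k → HEdge P, (∀ i, c i ∈ W) ∧
    ∀ i, (c (i + 1)).lo ⋖ (c i).hi ∧ (c (i + 1)).lo ≠ (c i).lo

/-- The generalized Morse complex `f(P)` of a poset: simplices are acyclic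
matchings of the Hasse diagram of `P`. -/
def genMorse (P : Type*) [PartialOrder P] : SComplex (HEdge P) where
  faces S := S.Nonempty ∧ (∀ p ∈ S, ∀ q ∈ S, p ≠ q → HEdge.Compat p q) ∧
    ¬ HasPosetCycle {p | p ∈ S}
  not_empty h := by simpa using h.1
  down_closed := by
    rintro σ τ ⟨-, hm, hc⟩ hsub hne
    refine ⟨hne, fun p hp q hq h => hm p (hsub hp) q (hsub hq) h, fun h => hc ?_⟩
    obtain ⟨k, hk, c, hc', hp⟩ := h
    exact ⟨k, hk, c, fun i => hsub (hc' i), hp⟩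

/-- The automorphism group of a simplicial complex, as a subgroup of `Perm V`. -/
def autGroup {V : Type*} [DecidableEq V] (K : SComplex V) : Subgroup (Equiv.Perm V) where
  carrier := {e | ∀ σ : Finset V, K.faces σ ↔ K.faces (σ.image e)}
  one_mem' := by intro σ; simp
  mul_mem' := by
    intro a b ha hb σ
    rw [hb σ, ha (σ.image b)]
    simp [Finset.image_image, Equiv.Perm.coe_mul]
  inv_mem' := by
    intro a ha σ
    have := ha (σ.image ⇑a⁻¹)
    simpa [Finset.image_image, Function.comp_def, Equiv.apply_symm_apply,
      Finset.image_id'] using this.symm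

/-- The full subcomplex of `K` on a set `S` of vertices. -/
def restrictTo {V : Type*} (K : SComplex V) (S : Set V) : Finset V → Prop :=
  fun σ => K.faces σ ∧ ∀ x ∈ σ, x ∈ S

/-- `S` spans a fully connected subcomplex: `K = (K∣S) * (K∣Sᶜ)`. -/
def FullyConnected {V : Type*} [DecidableEq V] (K : SComplex V) (S : Set V) : Prop :=
  ∀ σ : Finset V, K.faces σ ↔ (σ.Nonempty ∧ ∃ α β : Finset V,
    (restrictTo K S α ∨ α = ∅) ∧ ((K.faces β ∧ ∀ x ∈ β, x ∉ S) ∨ β = ∅) ∧ σ = α ∪ β)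

/-- The primitive pair `(x, xy)` on an edge `{x,y}`. -/
def edgePair {V : Type*} [DecidableEq V] (K : SComplex V) (x y : V) (hxy : x ≠ y)
    (h : K.faces {x, y}) : VPair K where
  lo := {x}
  hi := {x, y}
  lo_face := K.down_closed h (by simp) (Finset.singleton_nonempty x)
  hi_face := h
  lo_sub := by simp
  card_eq := by
    rw [Finset.card_singleton, Finset.card_insert_of_notMem (by simp [hxy]),
      Finset.card_singleton]

set_option linter.unusedSectionVars false

section IFlag
variable {V : Type*} [DecidableEq V]

def IFlag (E : V → V → Prop) (S : Finset V) (σ : Finset V) : Prop :=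
  σ.Nonempty ∧ σ ⊆ S ∧ ∀ x ∈ σ, ∀ y ∈ σ, x ≠ y → ¬ E x y

lemma iflag_erase (E : V → V → Prop) (S : Finset V) (w' : V) :
    (fun σ => IFlag E S σ ∧ w' ∉ σ) = IFlag E (S.erase w') := by
  funext σ
  simp only [eq_iff_iff, IFlag]
  constructor
  · rintro ⟨⟨h1, h2, h3⟩, h4⟩
    exact ⟨h1, fun x hx => Finset.mem_erase.mpr ⟨fun h => h4 (h ▸ hx), h2 hx⟩, h3⟩
  · rintro ⟨h1, h2, h3⟩
    exact ⟨⟨h1, fun x hx => Finset.mem_of_mem_erase (h2 hx), h3⟩,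
      fun hw => (Finset.mem_erase.mp (h2 hw)).1 rfl⟩

lemma iflag_singleton (E : V → V → Prop) (S : Finset V) {w : V} (hw : w ∈ S) :
    IFlag E S {w} := by
  refine ⟨Finset.singleton_nonempty w, by simpa using hw, ?_⟩
  intro x hx y hy hxy
  simp only [Finset.mem_singleton] at hx hy
  exact absurd (hx.trans hy.symm) hxy

lemma iflag_step (E : V → V → Prop) (hsymm : ∀ a b, E a b → E b a) {S : Finset V} {w w' : V}
    (hw : w ∈ S) (hw' : w' ∈ S) (hne : w ≠ w') (hnE : ¬ E w w')
    (hN : ∀ u ∈ S, E w u → E w' u)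
    (h : SCAux (IFlag E (S.erase w'))) : SCAux (IFlag E S) := by
  refine SCAux.step _ w w' hne (iflag_singleton E S hw) (iflag_singleton E S hw') ?_ ?_
  · rintro σ ⟨⟨hσne, hσS, hσp⟩, hmax⟩ hw'σ
    by_contra hwσ
    have hface : IFlag E S (insert w σ) := by
      refine ⟨Finset.insert_nonempty _ _, Finset.insert_subset hw hσS, ?_⟩
      have claim : ∀ u ∈ σ, ¬ E w u := by
        intro u hu hEwu
        have hE' := hN u (hσS hu) hEwu
        rcases eq_or_ne u w' with h | h
        · exact hnE (h ▸ hEwu)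
        · exact hσp w' hw'σ u hu (Ne.symm h) hE'
      intro x hx y hy hxy hE
      rcases Finset.mem_insert.mp hx with hx0 | hx1 <;>
        rcases Finset.mem_insert.mp hy with hy0 | hy1
      · exact hxy (hx0.trans hy0.symm)
      · exact claim y hy1 (hx0 ▸ hE)
      · exact claim x hx1 (hy0 ▸ hsymm _ _ hE)
      · exact hσp x hx1 y hy1 hxy hE
    have := hmax _ hface (Finset.subset_insert w σ)
    exact hwσ (this ▸ Finset.mem_insert_self w σ)
  · rw [iflag_erase]; exact h

lemma iflag_cone (E : V → V → Prop) (hsymm : ∀ a b, E a b → E b a) :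
    ∀ (S : Finset V) (w : V), w ∈ S → (∀ u ∈ S, ¬ E w u) → SCAux (IFlag E S) := by
  intro S
  induction S using Finset.strongInduction with
  | _ S ih =>
    intro w hw hiso
    by_cases hS : S = {w}
    · subst hS
      refine SCAux.point _ w ?_
      intro σ
      constructor
      · rintro ⟨hne, hsub, -⟩
        exact Finset.eq_singleton_iff_nonempty_unique_mem.mpr
          ⟨hne, fun x hx => Finset.mem_singleton.mp (hsub hx)⟩
      · rintro rfl; exact iflag_singleton E _ (Finset.mem_singleton_self w)
    · obtain ⟨w', hw', hww'⟩ : ∃ w' ∈ S, w' ≠ w := by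
        by_contra hc
        push_neg at hc
        exact hS (Finset.eq_singleton_iff_nonempty_unique_mem.mpr ⟨⟨w, hw⟩, hc⟩)
      refine iflag_step E hsymm hw hw' (Ne.symm hww') (hiso w' hw') (fun u hu hE => absurd hE (hiso u hu)) ?_
      exact ih _ (Finset.erase_ssubset hw') w (Finset.mem_erase.mpr ⟨Ne.symm hww', hw⟩)
        (fun u hu => hiso u (Finset.mem_of_mem_erase hu))

end IFlag

section PathSC
variable {V : Type*} [DecidableEq V]

lemma iflag_path (E : V → V → Prop) (hsymm : ∀ a b, E a b → E b a) (k : ℕ) (f : ℕ → V)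
    (hinj : ∀ a b, a < 3*k+1 → b < 3*k+1 → f a = f b → a = b)
    (hE : ∀ a b, a < 3*k+1 → b < 3*k+1 → (E (f a) (f b) ↔ (a+1 = b ∨ b+1 = a))) :
    SCAux (IFlag E ((Finset.range (3*k+1)).image f)) := by
  set T : ℕ → Finset ℕ := fun j => (Finset.range (3*k+1)).filter (fun x => x % 3 ≠ 2 ∨ 3*j ≤ x)
    with hT
  have hmemT : ∀ j x, x ∈ T j ↔ (x < 3*k+1 ∧ (x % 3 ≠ 2 ∨ 3*j ≤ x)) := by
    intro j x
    simp [hT, Finset.mem_filter, Finset.mem_range]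
  have himage_erase : ∀ (s : Finset ℕ) (a : ℕ), (∀ x ∈ s, x < 3*k+1) → a < 3*k+1 →
      ((s.erase a).image f) = (s.image f).erase (f a) := by
    intro s a hs ha
    ext y
    simp only [Finset.mem_image, Finset.mem_erase]
    constructor
    · rintro ⟨b, ⟨hba, hbs⟩, rfl⟩
      exact ⟨fun h => hba (hinj b a (hs b hbs) ha h), b, hbs, rfl⟩
    · rintro ⟨hy, b, hbs, rfl⟩
      exact ⟨b, ⟨fun h => hy (congrArg f h), hbs⟩, rfl⟩
  have key : ∀ d, d ≤ k → SCAux (IFlag E ((T (k-d)).image f)) := by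
    intro d
    induction d with
    | zero =>
      intro _
      refine iflag_cone E hsymm _ (f (3*k)) ?_ ?_
      · exact Finset.mem_image_of_mem f ((hmemT _ _).mpr (by omega))
      · rintro u hu
        obtain ⟨b, hb, rfl⟩ := Finset.mem_image.mp hu
        rw [hmemT] at hb
        rw [hE _ _ (by omega) (by omega)]
        omega
    | succ d ih =>
      intro hdk
      have hj : k - (d+1) < k := by omega
      set j := k - (d+1) with hjdef
      have hjk : j < k := hj
      have hquot : k - d = j + 1 := by omega
      have h3j : (3*j) ∈ T j := (hmemT _ _).mpr (by omega)
      have h3j2 : (3*j+2) ∈ T j := (hmemT _ _).mpr (by omega)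
      have hTsub : ∀ x ∈ T j, x < 3*k+1 := fun x hx => ((hmemT _ _).mp hx).1
      refine iflag_step E hsymm (S := (T j).image f) (w := f (3*j)) (w' := f (3*j+2))
        (Finset.mem_image_of_mem f h3j) (Finset.mem_image_of_mem f h3j2) ?_ ?_ ?_ ?_
      · intro h
        have := hinj _ _ (by omega) (by omega) h
        omega
      · rw [hE _ _ (by omega) (by omega)]; omega
      · rintro u hu hEu
        obtain ⟨b, hb, rfl⟩ := Finset.mem_image.mp hu
        rw [hmemT] at hb
        rw [hE _ _ (by omega) (by omega)] at hEu
        have hb' : b = 3*j+1 := by omega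
        subst hb'
        rw [hE _ _ (by omega) (by omega)]
        omega
      · have hTT : (T j).erase (3*j+2) = T (j+1) := by
          ext x
          rw [Finset.mem_erase, hmemT, hmemT]
          omega
        rw [← himage_erase _ _ hTsub (by omega), hTT, ← hquot]
        exact ih (by omega)
  have hT0 : T 0 = Finset.range (3*k+1) := by
    ext x; rw [hmemT, Finset.mem_range]; omega
  have := key k (le_refl k)
  rwa [Nat.sub_self, hT0] at this

end PathSC

section Concrete
variable {m : ℕ}

lemma VPair.ext' {V : Type*} {K : SComplex V} {p q : VPair K}
    (h1 : p.lo = q.lo) (h2 : p.hi = q.hi) : p = q := by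
  cases p; cases q
  cases h1; cases h2
  rfl

lemma pg_edge_face (hm : 2 ≤ m) {x y : Fin m}
    (hxy : (SimpleGraph.pathGraph m).Adj x y) :
    (graphComplex (SimpleGraph.pathGraph m)).faces {x, y} :=
  ⟨Finset.insert_nonempty _ _, {x, y}, Or.inr ⟨x, y, hxy, rfl⟩, subset_rfl⟩

lemma pg_face_card_le {σ : Finset (Fin m)}
    (h : (graphComplex (SimpleGraph.pathGraph m)).faces σ) : σ.card ≤ 2 := by
  obtain ⟨-, τ, hτ, hsub⟩ := h
  have hle := Finset.card_le_card hsub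
  rcases hτ with ⟨x, rfl⟩ | ⟨x, y, hxy, rfl⟩
  · simp at hle; omega
  · have h2 : ({x, y} : Finset (Fin m)).card = 2 := Finset.card_pair hxy.ne
    omega

lemma pg_face2 {σ : Finset (Fin m)}
    (h : (graphComplex (SimpleGraph.pathGraph m)).faces σ) (hc : σ.card = 2) :
    ∃ x y : Fin m, (SimpleGraph.pathGraph m).Adj x y ∧ σ = {x, y} := by
  obtain ⟨-, τ, hτ, hsub⟩ := h
  rcases hτ with ⟨x, rfl⟩ | ⟨x, y, hxy, rfl⟩
  · have := Finset.card_le_card hsub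
    simp at this; omega
  · refine ⟨x, y, hxy, Finset.eq_of_subset_of_card_le hsub ?_⟩
    rw [Finset.card_pair hxy.ne, hc]

/-- canonical form: every primitive pair lives on an edge `{x, x+1}`. -/
lemma vpair_char (p : VPair (graphComplex (SimpleGraph.pathGraph m))) :
    ∃ x y : Fin m, (x : ℕ) + 1 = (y : ℕ) ∧ p.hi = {x, y} ∧ (p.lo = {x} ∨ p.lo = {y}) := by
  have hlo1 : p.lo.card = 1 := by
    have h1 : 1 ≤ p.lo.card := Finset.card_pos.mpr p.lo_face.1
    have h2 := pg_face_card_le p.hi_face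
    have := p.card_eq
    omega
  have hhi2 : p.hi.card = 2 := by rw [p.card_eq, hlo1]
  obtain ⟨x, y, hxy, hhi⟩ := pg_face2 p.hi_face hhi2
  obtain ⟨z, hz⟩ := Finset.card_eq_one.mp hlo1
  have hzmem : z ∈ p.hi := p.lo_sub (hz ▸ Finset.mem_singleton_self z)
  rw [hhi] at hzmem
  rcases SimpleGraph.pathGraph_adj.mp hxy with h | h
  · refine ⟨x, y, h, hhi, ?_⟩
    rcases Finset.mem_insert.mp hzmem with rfl | hzy
    · exact Or.inl hz
    · exact Or.inr (by rw [hz, Finset.mem_singleton.mp hzy])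
  · refine ⟨y, x, h, by rw [hhi, Finset.pair_comm], ?_⟩
    rcases Finset.mem_insert.mp hzmem with rfl | hzy
    · exact Or.inr hz
    · exact Or.inl (by rw [hz, Finset.mem_singleton.mp hzy])

end Concrete

section Enc

lemma sing_ne_pair {m : ℕ} (x y z : Fin m) (hyz : y ≠ z) :
    ({x} : Finset (Fin m)) ≠ {y, z} := by
  intro h
  have := congrArg Finset.card h
  rw [Finset.card_singleton, Finset.card_pair hyz] at this
  omega

lemma pair_mk_eq {m : ℕ} {i j : ℕ} {h1 : i < m} {h2 : i + 1 < m} {h3 : j < m} {h4 : j + 1 < m}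
    (h : ({⟨i, h1⟩, ⟨i + 1, h2⟩} : Finset (Fin m)) = {⟨j, h3⟩, ⟨j + 1, h4⟩}) : i = j := by
  have hi := Finset.ext_iff.mp h ⟨i, h1⟩
  have hj := Finset.ext_iff.mp h ⟨i + 1, h2⟩
  simp [Fin.ext_iff] at hi hj
  omega

noncomputable def fenc (m : ℕ) (hm : 2 ≤ m) (a : ℕ) :
    VPair (graphComplex (SimpleGraph.pathGraph m)) :=
  if a % 2 = 0 then
    edgePair (graphComplex (SimpleGraph.pathGraph m))
      ⟨min (a/2) (m-2), by omega⟩ ⟨min (a/2) (m-2) + 1, by omega⟩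
      (Fin.ne_of_val_ne (show min (a/2) (m-2) ≠ min (a/2) (m-2) + 1 by omega))
      (pg_edge_face hm (SimpleGraph.pathGraph_adj.mpr (Or.inl rfl)))
  else
    edgePair (graphComplex (SimpleGraph.pathGraph m))
      ⟨min (a/2) (m-2) + 1, by omega⟩ ⟨min (a/2) (m-2), by omega⟩
      (Fin.ne_of_val_ne (show min (a/2) (m-2) + 1 ≠ min (a/2) (m-2) by omega))
      (pg_edge_face hm (SimpleGraph.pathGraph_adj.mpr (Or.inr rfl)))

lemma fenc_lo {m : ℕ} (hm : 2 ≤ m) {a : ℕ} (ha : a < 2*(m-1)) :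
    (fenc m hm a).lo = {(⟨a/2 + a%2, by omega⟩ : Fin m)} := by
  have hmin : min (a/2) (m-2) = a/2 := by omega
  rcases Nat.mod_two_eq_zero_or_one a with h | h
  · rw [fenc, if_pos h]
    show ({⟨min (a/2) (m-2), _⟩} : Finset (Fin m)) = _
    rw [Finset.singleton_inj, Fin.ext_iff]
    simp; omega
  · rw [fenc, if_neg (by omega)]
    show ({⟨min (a/2) (m-2) + 1, _⟩} : Finset (Fin m)) = _
    rw [Finset.singleton_inj, Fin.ext_iff]
    simp; omega

lemma fenc_hi {m : ℕ} (hm : 2 ≤ m) {a : ℕ} (ha : a < 2*(m-1)) :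
    (fenc m hm a).hi = {(⟨a/2, by omega⟩ : Fin m), (⟨a/2 + 1, by omega⟩ : Fin m)} := by
  have hmin : min (a/2) (m-2) = a/2 := by omega
  rcases Nat.mod_two_eq_zero_or_one a with h | h
  · rw [fenc, if_pos h]
    show ({⟨min (a/2) (m-2), _⟩, ⟨min (a/2) (m-2) + 1, _⟩} : Finset (Fin m)) = _
    ext z
    simp [Fin.ext_iff]
    omega
  · rw [fenc, if_neg (by omega)]
    show ({⟨min (a/2) (m-2) + 1, _⟩, ⟨min (a/2) (m-2), _⟩} : Finset (Fin m)) = _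
    ext z
    simp [Fin.ext_iff]
    omega

lemma fenc_inj {m : ℕ} (hm : 2 ≤ m) {a b : ℕ} (ha : a < 2*(m-1)) (hb : b < 2*(m-1))
    (h : fenc m hm a = fenc m hm b) : a = b := by
  have hlo := congrArg VPair.lo h
  have hhi := congrArg VPair.hi h
  rw [fenc_lo hm ha, fenc_lo hm hb] at hlo
  rw [fenc_hi hm ha, fenc_hi hm hb] at hhi
  rw [Finset.singleton_inj, Fin.ext_iff] at hlo
  have := pair_mk_eq hhi
  simp at hlo
  omega

lemma fenc_ncompat {m : ℕ} (hm : 2 ≤ m) {a b : ℕ} (ha : a < 2*(m-1)) (hb : b < 2*(m-1)) :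
    ¬ VPair.Compatible (fenc m hm a) (fenc m hm b) ↔
      (a/2 + a%2 = b/2 + b%2 ∨ a/2 = b/2) := by
  have hl1 := fenc_lo hm ha
  have hl2 := fenc_lo hm hb
  have hh1 := fenc_hi hm ha
  have hh2 := fenc_hi hm hb
  constructor
  · intro hnc
    by_contra hcon
    push_neg at hcon
    obtain ⟨h1, h2⟩ := hcon
    refine hnc ⟨?_, ?_, ?_, ?_⟩
    · rw [hl1, hl2]
      intro h
      rw [Finset.singleton_inj, Fin.ext_iff] at h
      simp at h; omega
    · rw [hl1, hh2]
      exact sing_ne_pair _ _ _ (Fin.ne_of_val_ne (show b/2 ≠ b/2+1 by omega))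
    · rw [hh1, hl2]; intro h
      exact sing_ne_pair _ _ _ (Fin.ne_of_val_ne (show a/2 ≠ a/2+1 by omega)) h.symm
    · rw [hh1, hh2]; intro h
      exact h2 (pair_mk_eq h)
  · intro h hC
    obtain ⟨C1, C2, C3, C4⟩ := hC
    rcases h with h | h
    · refine C1 ?_
      rw [hl1, hl2, Finset.singleton_inj, Fin.ext_iff]
      simpa using h
    · refine C4 ?_
      rw [hh1, hh2]
      ext z
      simp [Fin.ext_iff]
      try omega

lemma fenc_surj {m : ℕ} (hm : 2 ≤ m) (p : VPair (graphComplex (SimpleGraph.pathGraph m))) :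
    ∃ a < 2*(m-1), fenc m hm a = p := by
  obtain ⟨x, y, hxy, hhi, hlo⟩ := vpair_char p
  have hy := y.isLt
  rcases hlo with hlo | hlo
  · refine ⟨2*(x:ℕ), by omega, VPair.ext' ?_ ?_⟩
    · rw [fenc_lo hm (by omega), hlo]
      ext z
      simp [Fin.ext_iff]
      try omega
    · rw [fenc_hi hm (by omega), hhi]
      ext z
      simp [Fin.ext_iff]
      try omega
  · refine ⟨2*(x:ℕ)+1, by omega, VPair.ext' ?_ ?_⟩
    · rw [fenc_lo hm (by omega), hlo]
      ext z
      simp [Fin.ext_iff]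
      try omega
    · rw [fenc_hi hm (by omega), hhi]
      ext z
      simp [Fin.ext_iff]
      try omega

end Enc

section NoCycle

lemma no_closed {m : ℕ} (W : Set (VPair (graphComplex (SimpleGraph.pathGraph m))))
    (hW : IsDVF W) : ¬ HasClosedPath W := by
  rintro ⟨k, hk, c, hcW, hpath⟩
  have hlo : ∀ i, ∃ z : Fin m, (c i).lo = {z} := by
    intro i
    obtain ⟨u, v, -, -, h⟩ := vpair_char (c i)
    rcases h with h | h
    exacts [⟨u, h⟩, ⟨v, h⟩]
  choose x hx using hlo
  have hA : ∀ i, (c i).hi = {x i, x (i+1)} ∧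
      (SimpleGraph.pathGraph m).Adj (x i) (x (i+1)) := by
    intro i
    obtain ⟨u, v, huv, hhi, -⟩ := vpair_char (c i)
    have hadj : (SimpleGraph.pathGraph m).Adj u v :=
      SimpleGraph.pathGraph_adj.mpr (Or.inl huv)
    have hxi : x i ∈ (c i).hi := by
      have := (c i).lo_sub
      rw [hx i] at this
      exact this (Finset.mem_singleton_self _)
    have hxi1 : x (i+1) ∈ (c i).hi := by
      have h1 := (hpath i).1
      rw [hx (i+1)] at h1
      exact h1 (Finset.mem_singleton_self _)
    have hne : x (i+1) ≠ x i := by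
      have h2 := (hpath i).2.1
      rw [hx (i+1), hx i] at h2
      exact fun h => h2 (by rw [h])
    rw [hhi] at hxi hxi1
    rcases Finset.mem_insert.mp hxi with h1 | h1
    · rcases Finset.mem_insert.mp hxi1 with h2 | h2
      · exact absurd (h2.trans h1.symm) hne
      · have h2' := Finset.mem_singleton.mp h2
        exact ⟨by rw [hhi, h1, h2'], by rw [h1, h2']; exact hadj⟩
    · have h1' := Finset.mem_singleton.mp h1
      rcases Finset.mem_insert.mp hxi1 with h2 | h2
      · exact ⟨by rw [hhi, h1', h2, Finset.pair_comm u v],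
          by rw [h1', h2]; exact hadj.symm⟩
      · exact absurd ((Finset.mem_singleton.mp h2).trans h1'.symm) hne
  have hB : ∀ i, x (i+1+1) ≠ x i := by
    intro i heq
    have hcne : c (i+1) ≠ c i := by
      intro h
      have h2 := (hpath i).2.1
      rw [h] at h2
      exact h2 rfl
    have hcomp := hW _ (hcW (i+1)) _ (hcW i) hcne
    refine hcomp.2.2.2 ?_
    rw [(hA (i+1)).1, (hA i).1, heq]
    exact Finset.pair_comm _ _
  set g : ℕ → ℕ := fun j => (x ((j : ZMod k))).val with hg
  have hcast1 : ∀ j : ℕ, g (j+1) = (x ((j : ZMod k) + 1)).val := by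
    intro j
    simp [hg]
  have hcast2 : ∀ j : ℕ, g (j+1+1) = (x ((j : ZMod k) + 1 + 1)).val := by
    intro j
    have : ((j + 1 + 1 : ℕ) : ZMod k) = (j : ZMod k) + 1 + 1 := by push_cast; ring
    simp [hg, this]
  have hstep : ∀ j : ℕ, g (j+1) = g j + 1 ∨ g j = g (j+1) + 1 := by
    intro j
    have had := (hA (j : ZMod k)).2
    rw [SimpleGraph.pathGraph_adj] at had
    rw [hcast1 j]
    simp only [hg]
    omega
  have hne2 : ∀ j : ℕ, g (j+1+1) ≠ g j := by
    intro j h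
    rw [hcast2 j] at h
    exact hB ((j : ZMod k)) (Fin.ext h)
  rcases hstep 0 with h0 | h0
  · have mono : ∀ j, g (j+1) = g j + 1 := by
      intro j
      induction j with
      | zero => exact h0
      | succ j ih =>
        rcases hstep (j+1) with h | h
        · exact h
        · exact absurd (show g (j+1+1) = g j by omega) (hne2 j)
    have glin : ∀ j, g j = g 0 + j := by
      intro j
      induction j with
      | zero => rfl
      | succ j ih => rw [mono j, ih]; omega
    have hgk : g k = g 0 := by
      simp [hg, ZMod.natCast_self]
    have := glin k
    omega
  · have mono : ∀ j, g j = g (j+1) + 1 := by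
      intro j
      induction j with
      | zero => exact h0
      | succ j ih =>
        rcases hstep (j+1) with h | h
        · exact absurd (show g (j+1+1) = g j by omega) (hne2 j)
        · exact h
    have glin : ∀ j, g j + j = g 0 := by
      intro j
      induction j with
      | zero => rfl
      | succ j ih =>
        have := mono j
        omega
    have := glin (g 0 + 1)
    omega

end NoCycle

/-- the Morse complex of the path `P_{3n-1}` on `3n` vertices is
strongly collapsible. -/
theorem stmt_6 (n : ℕ) (hn : 1 ≤ n) :
    StronglyCollapsible (MorseComplex (graphComplex (SimpleGraph.pathGraph (3 * n)))) := by
  have hm : 2 ≤ 3 * n := by omega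
  set K := graphComplex (SimpleGraph.pathGraph (3 * n)) with hK
  show SCAux (MorseComplex K).faces
  have hfaces : (MorseComplex K).faces =
      IFlag (fun p q => p ≠ q ∧ ¬ VPair.Compatible p q)
        ((Finset.range (2*(3*n-1))).image (fenc (3*n) hm)) := by
    funext σ
    simp only [eq_iff_iff]
    constructor
    · rintro ⟨hne, hdvf, hnc⟩
      refine ⟨hne, ?_, ?_⟩
      · intro p hp
        obtain ⟨a, ha, hae⟩ := fenc_surj hm p
        exact Finset.mem_image.mpr ⟨a, Finset.mem_range.mpr ha, hae⟩
      · intro p hp q hq hpq hE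
        exact hE.2 (hdvf p hp q hq hpq)
    · rintro ⟨hne, hsub, hpw⟩
      have hdvf : IsDVF {p | p ∈ σ} := by
        intro p hp q hq hpq
        by_contra hc
        exact hpw p hp q hq hpq ⟨hpq, hc⟩
      exact ⟨hne, hdvf, no_closed _ hdvf⟩
  rw [hfaces]
  have hN : 2*(3*n-1) = 3*(2*n-1)+1 := by omega
  rw [hN]
  refine iflag_path _ ?_ (2*n-1) (fenc (3*n) hm) ?_ ?_
  · rintro p q ⟨h1, h2⟩
    refine ⟨h1.symm, fun hc => h2 ⟨hc.1.symm, hc.2.2.1.symm, hc.2.1.symm, hc.2.2.2.symm⟩⟩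
  · intro a b ha hb h
    exact fenc_inj hm (by omega) (by omega) h
  · intro a b ha hb
    constructor
    · rintro ⟨hne', hnc⟩
      have hab : a ≠ b := fun h => hne' (by rw [h])
      rw [fenc_ncompat hm (by omega) (by omega)] at hnc
      omega
    · intro h
      have hab : a ≠ b := by omega
      exact ⟨fun he => hab (fenc_inj hm (by omega) (by omega) he),
        (fenc_ncompat hm (by omega) (by omega)).mpr (by omega)⟩
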